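/- There exists a function g : ℕ × ℚ → ℕ, namely g(m, δ) = (m−1)·e + m(m−1)/2 where e is the least integer with 2^{−e} < δ, such that: if n = g(m, δ), n ≥ m ≥ 1 ≥ δ > 0, and X is a finite set of naturals with |X| ≥ n, then there exists Y ⊆ X with |Y| = m, min Y = min X, such that for every X-quasistrong binary tree T and every A ⊆ T ∩ 2^{max X} with |A| ≥ δ·|T ∩ 2^{max X}|, there is a Y-quasistrong tree S ⊆ T all of whose leaves have an extension in A. -/

import Mathlib

open Finset

/-- Minimum of a finite set of naturals (0 for the empty set). -/
def fmin (X : Finset ℕ) : ℕ := X.min.untopD 0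

/-- Maximum of a finite set of naturals (0 for the empty set). -/
def fmax (X : Finset ℕ) : ℕ := X.max.unbotD 0

/-- `OmegaLarge d X` : `X` is ω^d-large (for `d ≥ 1`; `OmegaLarge 0` means nonempty).
`X` is ω^{d+1}-large iff `X = {min X} ∪ ⋃_{m < min X} X_m` where the `X_m` form a
stack (each max below the next min) of ω^d-large sets all above `min X`. -/
def OmegaLarge : ℕ → Finset ℕ → Prop
  | 0, X => X.Nonempty
  | d+1, X => X.Nonempty ∧ ∃ f : ℕ → Finset ℕ,
      (∀ m < fmin X, OmegaLarge d (f m)) ∧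
      (∀ m, m + 1 < fmin X → fmax (f m) < fmin (f (m+1))) ∧
      (∀ m < fmin X, fmin X < fmin (f m)) ∧
      X = insert (fmin X) ((Finset.range (fmin X)).biUnion f)

/-- `OmegaMulLarge d n X` : `X` is ω^d·n-large, i.e. a union of a stack of `n`
ω^d-large sets. -/
def OmegaMulLarge (d n : ℕ) (X : Finset ℕ) : Prop :=
  ∃ f : ℕ → Finset ℕ,
    (∀ m < n, OmegaLarge d (f m)) ∧
    (∀ m, m + 1 < n → fmax (f m) < fmin (f (m+1))) ∧
    X = (Finset.range n).biUnion f

/-- A (finite) binary tree: a set of binary strings closed under initial segments. -/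
def IsTree (T : Finset (List Bool)) : Prop :=
  ∀ σ ∈ T, ∀ τ : List Bool, τ <+: σ → τ ∈ T

/-- `level T x` is `T ∩ 2^x`, the set of strings in `T` of length `x`. -/
def level (T : Finset (List Bool)) (x : ℕ) : Finset (List Bool) :=
  T.filter (fun σ => σ.length = x)

/-- Two strings are compatible if one is an initial segment of the other. -/
def Compat (σ τ : List Bool) : Prop := σ <+: τ ∨ τ <+: σ

instance (σ τ : List Bool) : Decidable (Compat σ τ) := by
  unfold Compat; infer_instance

/-- `T_ρ` : the elements of `T` compatible with `ρ`. -/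
def Tsub (T : Finset (List Bool)) (ρ : List Bool) : Finset (List Bool) :=
  T.filter (fun σ => Compat σ ρ)

/-- `x` and `z` are consecutive elements of `X`. -/
def Consec (X : Finset ℕ) (x z : ℕ) : Prop :=
  x ∈ X ∧ z ∈ X ∧ x < z ∧ ∀ y ∈ X, y ≤ x ∨ z ≤ y

/-- `T` is `X`-quasistrong: `T` is a tree meeting every level in `X`, and every
node at a level of `X` has exactly two (necessarily incompatible) extensions at
the next level of `X`. -/
def QuasiStrong (X : Finset ℕ) (T : Finset (List Bool)) : Prop :=
  IsTree T ∧ (∀ x ∈ X, (level T x).Nonempty) ∧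
  ∀ x z, Consec X x z → ∀ σ ∈ level T x,
    ((level T z).filter (fun τ => σ <+: τ)).card = 2

/-- `σ` is a leaf (maximal element) of `S`. -/
def IsLeaf (S : Finset (List Bool)) (σ : List Bool) : Prop :=
  σ ∈ S ∧ ∀ τ ∈ S, σ <+: τ → τ = σ

/-- `S` is `(C,Y)`-prehomogeneous for color `c`. -/
def PrehomFor (C : List Bool → ℕ) (Y : Finset ℕ) (S : Finset (List Bool)) (c : ℕ) : Prop :=
  ∀ x z, Consec Y x z → ∀ σ ∈ level S x, ∀ τ ∈ level S z, σ <+: τ →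
    ∃ ζ ∈ S, σ <+: ζ ∧ ζ <+: τ ∧ C ζ = c

/-- `S` is `(C,Y)`-prehomogeneous (for some color). -/
def Prehom (C : List Bool → ℕ) (Y : Finset ℕ) (S : Finset (List Bool)) : Prop :=
  ∃ c, PrehomFor C Y S c

/-- The main clause of persistence: for every `X`-quasistrong tree `T` and every
`k`-coloring `C` of the leaves `T ∩ 2^{max X}`, there are a color `c < k` and a
`Y`-quasistrong subtree `S ⊆ T` each of whose leaves has an extension in `C⁻¹(c)`. -/
def PersClause (k : ℕ) (X Y : Finset ℕ) : Prop :=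
  ∀ T : Finset (List Bool), QuasiStrong X T →
    ∀ C : List Bool → ℕ, (∀ σ ∈ level T (fmax X), C σ < k) →
      ∃ c < k, ∃ S ⊆ T, QuasiStrong Y S ∧
        ∀ σ, IsLeaf S σ → ∃ τ ∈ level T (fmax X), σ <+: τ ∧ C τ = c

/-- `Persistent d n k i X` : `X` is `(ω^d·n, k, i)`-persistent. -/
def Persistent (d n k : ℕ) : ℕ → Finset ℕ → Prop
  | 0, X => OmegaMulLarge d n X
  | i+1, X => ∃ Y, Y ⊆ X ∧ Persistent d n k i Y ∧ PersClause k X Y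

/-- `SuperPersistent d n k i X` : `X` is `(ω^d·n, k, i)`-superpersistent. -/
def SuperPersistent (d n k i : ℕ) (X : Finset ℕ) : Prop :=
  ∀ T : List Bool → Finset (List Bool),
    (∀ ρ : List Bool, ρ.length = fmin X →
      QuasiStrong X (T ρ) ∧ ∀ σ ∈ T ρ, Compat σ ρ) →
    ∀ C : List Bool → ℕ, (∀ σ, C σ < k) →
      ∃ Y ⊆ X, Persistent d n k i Y ∧
        ∀ ρ : List Bool, ρ.length = fmin X →
          ∃ S ⊆ T ρ, QuasiStrong Y S ∧ Prehom C Y S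

/-- `eOf δ` : the least integer `e` with `2^{-e} < δ`. -/
noncomputable def eOf (δ : ℚ) : ℕ := sInf {e : ℕ | (2:ℚ) ^ (-(e:ℤ)) < δ}

/-- The Kučera–Gács coding bound `g(m,δ) = (m-1)e + m(m-1)/2`. -/
noncomputable def gKG (m : ℕ) (δ : ℚ) : ℕ := (m-1) * eOf δ + m*(m-1)/2

/-- `ḡ(x,k,i)`: iterated Kučera–Gács bound. -/
noncomputable def gbar (x k : ℕ) : ℕ → ℕ
  | 0 => x + k + 1
  | i+1 => gKG (gbar x k i) (1/(k:ℚ))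

/-- `h(ℓ,m,δ) = 2^{eℓ·2^{5m}}` where `e` is least with `2^{-e} < δ`. -/
noncomputable def hFun (l m : ℕ) (δ : ℚ) : ℕ := 2 ^ (eOf δ * l * 2 ^ (5*m))

/-- `h̄(x,n,k) = h(2^x, n, 1/k)·k^{2^x}`. -/
noncomputable def hbar (x n k : ℕ) : ℕ := hFun (2^x) n (1/(k:ℚ)) * k^(2^x)

/-- `expIter n x = exp^n(x)` where `exp(x) = 2^x`. -/
def expIter : ℕ → ℕ → ℕ
  | 0, x => x
  | n+1, x => 2 ^ (expIter n x)

section Aux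

/-! ### List prefix lemmas -/

lemma take_eq_of_prefix {τ υ : List Bool} (h : τ <+: υ) : υ.take τ.length = τ :=
  (List.prefix_iff_eq_take.mp h).symm

lemma prefix_take_of_prefix {σ υ : List Bool} (h : σ <+: υ) {t : ℕ} (ht : σ.length ≤ t) :
    σ <+: υ.take t :=
  List.prefix_take_iff.mpr ⟨h, ht⟩

lemma eq_of_prefix_length_eq {σ τ υ : List Bool} (h1 : σ <+: υ) (h2 : τ <+: υ)
    (h : σ.length = τ.length) : σ = τ := by
  rcases List.prefix_or_prefix_of_prefix h1 h2 with h' | h'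
  · exact h'.eq_of_length h
  · exact (h'.eq_of_length h.symm).symm

lemma compat_symm {σ τ : List Bool} (h : Compat σ τ) : Compat τ σ := by
  rcases h with h' | h'
  · exact Or.inr h'
  · exact Or.inl h'

lemma compat_prefix_of_le {σ τ : List Bool} (h : Compat σ τ) (hl : σ.length ≤ τ.length) :
    σ <+: τ := by
  rcases h with h' | h'
  · exact h'
  · have : τ = σ := h'.eq_of_length (le_antisymm h'.length_le hl)
    rw [this]

/-! ### fmin / fmax -/

lemma fmin_eq_min' (X : Finset ℕ) (h : X.Nonempty) : fmin X = X.min' h := by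
  rw [fmin, ← Finset.coe_min' h]; rfl

lemma fmax_eq_max' (X : Finset ℕ) (h : X.Nonempty) : fmax X = X.max' h := by
  rw [fmax, ← Finset.coe_max' h]; rfl

lemma fmin_mem (X : Finset ℕ) (h : X.Nonempty) : fmin X ∈ X := by
  rw [fmin_eq_min' X h]; exact X.min'_mem h

lemma fmin_le (X : Finset ℕ) {y : ℕ} (hy : y ∈ X) : fmin X ≤ y := by
  rw [fmin_eq_min' X ⟨y, hy⟩]; exact X.min'_le y hy

lemma fmax_mem (X : Finset ℕ) (h : X.Nonempty) : fmax X ∈ X := by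
  rw [fmax_eq_max' X h]; exact X.max'_mem h

lemma le_fmax (X : Finset ℕ) {y : ℕ} (hy : y ∈ X) : y ≤ fmax X := by
  rw [fmax_eq_max' X ⟨y, hy⟩]; exact X.le_max' y hy

lemma fmin_eq_of (X : Finset ℕ) {a : ℕ} (ha : a ∈ X) (h : ∀ y ∈ X, a ≤ y) : fmin X = a :=
  le_antisymm (fmin_le X ha) (h _ (fmin_mem X ⟨a, ha⟩))

lemma fmax_eq_of (X : Finset ℕ) {a : ℕ} (ha : a ∈ X) (h : ∀ y ∈ X, y ≤ a) : fmax X = a :=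
  le_antisymm (h _ (fmax_mem X ⟨a, ha⟩)) (le_fmax X ha)

/-! ### enumeration of a finset of naturals -/

noncomputable def nthel (X : Finset ℕ) (i : ℕ) : ℕ :=
  if h : i < X.card then X.orderEmbOfFin rfl ⟨i, h⟩ else 0

lemma nthel_mem (X : Finset ℕ) {i : ℕ} (h : i < X.card) : nthel X i ∈ X := by
  rw [nthel, dif_pos h]; exact X.orderEmbOfFin_mem rfl ⟨i, h⟩

lemma nthel_lt (X : Finset ℕ) {i j : ℕ} (hij : i < j) (h : j < X.card) :
    nthel X i < nthel X j := by
  rw [nthel, nthel, dif_pos h, dif_pos (hij.trans h)]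
  exact (X.orderEmbOfFin rfl).strictMono (by simpa using hij)

lemma nthel_mono (X : Finset ℕ) {i j : ℕ} (hij : i ≤ j) (h : j < X.card) :
    nthel X i ≤ nthel X j := by
  rcases hij.lt_or_eq with h' | rfl
  · exact (nthel_lt X h' h).le
  · rfl

lemma nthel_surj (X : Finset ℕ) {y : ℕ} (hy : y ∈ X) : ∃ i < X.card, y = nthel X i := by
  have : y ∈ Set.range (X.orderEmbOfFin rfl) := by
    rw [Finset.range_orderEmbOfFin]; exact hy
  obtain ⟨⟨i, hi⟩, h⟩ := this
  exact ⟨i, hi, by rw [nthel, dif_pos hi, h]⟩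

lemma nthel_zero (X : Finset ℕ) (h : 0 < X.card) : nthel X 0 = fmin X := by
  refine (fmin_eq_of X (nthel_mem X h) ?_).symm
  intro y hy
  obtain ⟨i, hi, rfl⟩ := nthel_surj X hy
  exact nthel_mono X (Nat.zero_le i) hi

lemma nthel_last (X : Finset ℕ) (h : 0 < X.card) : nthel X (X.card - 1) = fmax X := by
  refine (fmax_eq_of X (nthel_mem X (by omega)) ?_).symm
  intro y hy
  obtain ⟨i, hi, rfl⟩ := nthel_surj X hy
  exact nthel_mono X (by omega) (by omega)

lemma nthel_consec (X : Finset ℕ) {p : ℕ} (h : p + 1 < X.card) :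
    Consec X (nthel X p) (nthel X (p + 1)) := by
  refine ⟨nthel_mem X (by omega), nthel_mem X h, nthel_lt X (by omega) h, ?_⟩
  intro y hy
  obtain ⟨i, hi, rfl⟩ := nthel_surj X hy
  rcases le_or_gt i p with h' | h'
  · exact Or.inl (nthel_mono X h' (by omega))
  · exact Or.inr (nthel_mono X h' hi)

end Aux
section Aux2

/-- Splitting a set of long strings according to their prefixes at level `L` of a tree. -/
lemma split_count (T : Finset (List Bool)) (hT : IsTree T) (B : Finset (List Bool))
    {L L' : ℕ} (hB : ∀ υ ∈ B, υ ∈ T ∧ υ.length = L') (hLL' : L ≤ L')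
    (σ : List Bool) (hσ : σ.length ≤ L) :
    (B.filter (fun υ => σ <+: υ)).card
      = ∑ τ ∈ (level T L).filter (fun τ => σ <+: τ), (B.filter (fun υ => τ <+: υ)).card := by
  classical
  rw [Finset.card_eq_sum_card_fiberwise
    (f := fun υ => υ.take L) (t := (level T L).filter (fun τ => σ <+: τ))]
  · apply Finset.sum_congr rfl
    intro τ hτ
    rw [Finset.mem_filter] at hτ
    obtain ⟨hτl, hτσ⟩ := hτ
    rw [level, Finset.mem_filter] at hτl
    congr 1
    ext υ
    simp only [Finset.mem_filter]
    constructor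
    · rintro ⟨⟨hυB, -⟩, htake⟩
      refine ⟨hυB, ?_⟩
      rw [← htake]; exact List.take_prefix _ _
    · rintro ⟨hυB, hpre⟩
      have h1 : υ.take L = τ := by
        have := take_eq_of_prefix hpre; rwa [hτl.2] at this
      exact ⟨⟨hυB, hτσ.trans hpre⟩, h1⟩
  · intro υ hυ
    rw [Finset.mem_coe, Finset.mem_filter] at hυ
    obtain ⟨hυB, hpre⟩ := hυ
    obtain ⟨hυT, hυl⟩ := hB υ hυB
    rw [Finset.mem_coe, Finset.mem_filter, level, Finset.mem_filter]
    refine ⟨⟨hT υ hυT _ (List.take_prefix _ _), ?_⟩, prefix_take_of_prefix hpre hσ⟩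
    rw [List.length_take]; omega

lemma level_mem {T : Finset (List Bool)} {σ : List Bool} {L : ℕ} :
    σ ∈ level T L ↔ σ ∈ T ∧ σ.length = L := by
  rw [level, Finset.mem_filter]

/-- Counting extensions in a quasistrong tree: from level `nthel X p` to `nthel X q`
there are exactly `2^(q-p)` extensions. -/
lemma levelcount (X : Finset ℕ) (T : Finset (List Bool)) (hT : QuasiStrong X T)
    {p q : ℕ} (hpq : p ≤ q) (hq : q < X.card) :
    ∀ σ ∈ level T (nthel X p),
      ((level T (nthel X q)).filter (fun τ => σ <+: τ)).card = 2 ^ (q - p) := by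
  induction q, hpq using Nat.le_induction with
  | base =>
    intro σ hσ
    rw [level_mem] at hσ
    have : (level T (nthel X p)).filter (fun τ => σ <+: τ) = {σ} := by
      ext τ
      simp only [Finset.mem_filter, Finset.mem_singleton, level_mem]
      constructor
      · rintro ⟨⟨hτT, hτl⟩, hpre⟩
        exact (hpre.eq_of_length (by omega)).symm
      · rintro rfl
        exact ⟨hσ, List.prefix_refl _⟩
    rw [this]; simp
  | succ q hpq ih =>
    intro σ hσ
    rw [level_mem] at hσ
    have hq' : q < X.card := by omega
    have step : ∀ τ ∈ level T (nthel X q),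
        ((level T (nthel X (q+1))).filter (fun υ => τ <+: υ)).card = 2 :=
      hT.2.2 _ _ (nthel_consec X hq)
    have hsplit := split_count T hT.1 (level T (nthel X (q+1)))
      (fun υ hυ => level_mem.mp hυ) (nthel_mono X (Nat.le_succ q) hq)
      σ (by rw [hσ.2]; exact nthel_mono X hpq hq')
    rw [hsplit, Finset.sum_congr rfl (fun τ hτ => step τ (Finset.mem_filter.mp hτ).1),
      Finset.sum_const, ih hq' σ (level_mem.mpr hσ)]
    have : q + 1 - p = (q - p) + 1 := by omega
    rw [this]; ring
section Aux3

def gp (e m t : ℕ) : ℕ := e + min t (m - 2)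

def idx (e m : ℕ) : ℕ → ℕ
  | 0 => 0
  | t+1 => idx e m t + gp e m (t+1)

noncomputable def alph (e m : ℕ) (δ : ℚ) : ℕ → ℚ
  | 0 => δ
  | t+1 => ((2:ℚ) ^ gp e m (t+1) * alph e m δ t - 1) / ((2:ℚ) ^ gp e m (t+1) - 1)

noncomputable def cpr (e m : ℕ) : ℕ → ℚ
  | 0 => 1
  | t+1 => cpr e m t * (1 - ((2:ℚ) ^ gp e m (t+1))⁻¹)

lemma gp_pos {e : ℕ} (he : 1 ≤ e) (m t : ℕ) : 1 ≤ gp e m t := by unfold gp; omega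

lemma two_le_pow_gp {e : ℕ} (he : 1 ≤ e) (m t : ℕ) : (2:ℚ) ≤ (2:ℚ) ^ gp e m t := by
  calc (2:ℚ) = 2^1 := (pow_one 2).symm
  _ ≤ 2 ^ gp e m t := by
      apply pow_le_pow_right₀ (by norm_num) (gp_pos he m t)

lemma idx_lt {e : ℕ} (he : 1 ≤ e) (m t : ℕ) : idx e m t < idx e m (t+1) := by
  have := gp_pos he m (t+1); simp only [idx]; omega

lemma idx_mono {e : ℕ} (he : 1 ≤ e) (m : ℕ) {s t : ℕ} (h : s ≤ t) :
    idx e m s ≤ idx e m t := by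
  induction t, h using Nat.le_induction with
  | base => exact le_rfl
  | succ t ht ih => exact ih.trans (idx_lt he m t).le

lemma idx_eq_sum (e m t : ℕ) : idx e m t = ∑ i ∈ Finset.range t, gp e m (i+1) := by
  induction t with
  | zero => rfl
  | succ t ih => rw [Finset.sum_range_succ, ← ih]; rfl

lemma idx_last {e m : ℕ} (hm : 2 ≤ m) :
    idx e m (m - 1) + 1 ≤ (m-1) * e + m*(m-1)/2 := by
  obtain ⟨k, rfl⟩ : ∃ k, m = k + 2 := ⟨m - 2, by omega⟩
  have h2 : k + 2 - 1 = k + 1 := by omega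
  have h3 : k + 2 - 2 = k := by omega
  rw [h2, idx_eq_sum]
  have h1 : ∀ i ∈ Finset.range (k+1), gp e (k+2) (i+1) = e + min (i+1) k := by
    intro i _; unfold gp; rw [h3]
  rw [Finset.sum_congr rfl h1, Finset.sum_add_distrib, Finset.sum_const, Finset.card_range,
    smul_eq_mul]
  have h3' : ∑ i ∈ Finset.range (k+1), min (i+1) k = (∑ i ∈ Finset.range k, (i+1)) + k := by
    rw [Finset.sum_range_succ]
    congr 1
    · exact Finset.sum_congr rfl (fun i hi => by rw [Finset.mem_range] at hi; omega)
    · omega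
  rw [h3']
  have h4 : (∑ i ∈ Finset.range k, (i+1)) = ∑ i ∈ Finset.range (k+1), i := by
    rw [Finset.sum_range_succ' (fun i => i) k]; simp
  have h5 : (∑ i ∈ Finset.range (k+1), i) * 2 = (k+1) * k := by
    simpa using Finset.sum_range_id_mul_two (k+1)
  rw [h4]
  have h6 : (k+2) * (k+1) = (∑ i ∈ Finset.range (k+1), i) * 2 + (k+1) * 2 := by
    rw [h5]; ring
  omega

lemma alph_le_one {e m : ℕ} (δ : ℚ) (he : 1 ≤ e) (hδ : δ ≤ 1) :
    ∀ t, alph e m δ t ≤ 1 := by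
  intro t
  induction t with
  | zero => exact hδ
  | succ t ih =>
    have hK := two_le_pow_gp he m (t+1)
    rw [alph]
    rw [div_le_one (by linarith)]
    nlinarith

lemma cpr_identity {e m : ℕ} (δ : ℚ) (he : 1 ≤ e) :
    ∀ t, cpr e m t * (1 - alph e m δ t) = 1 - δ := by
  intro t
  induction t with
  | zero => simp [cpr, alph]
  | succ t ih =>
    have hK := two_le_pow_gp he m (t+1)
    have h0 : (2:ℚ) ^ gp e m (t+1) ≠ 0 := by positivity
    have h1 : (2:ℚ) ^ gp e m (t+1) - 1 ≠ 0 := by intro h; linarith [hK]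
    rw [cpr, alph, ← ih]
    field_simp
    ring

lemma inv_pow_le {a b : ℕ} (h : a ≤ b) : ((2:ℚ)^b)⁻¹ ≤ ((2:ℚ)^a)⁻¹ := by
  apply inv_anti₀ (by positivity)
  exact pow_le_pow_right₀ (by norm_num) h

lemma cpr_lb {e m : ℕ} (he : 1 ≤ e) :
    ∀ i, i ≤ m - 2 → 1 - ((2:ℚ)^e)⁻¹ + ((2:ℚ)^(e+i))⁻¹ ≤ cpr e m i := by
  intro i
  induction i with
  | zero => intro _; simp [cpr]
  | succ i ih =>
    intro hi
    have ih' := ih (by omega)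
    have hgap : gp e m (i+1) = e + (i+1) := by
      unfold gp; congr 1; omega
    rw [cpr, hgap]
    set q : ℚ := ((2:ℚ)^(e+(i+1)))⁻¹ with hq
    set p : ℚ := ((2:ℚ)^(e+i))⁻¹ with hp
    set ε : ℚ := ((2:ℚ)^e)⁻¹ with hε
    have hpq : p = 2 * q := by
      rw [hp, hq, show e + (i+1) = (e+i)+1 from by omega, pow_succ, mul_inv]
      field_simp
    have hqpos : 0 < q := by rw [hq]; positivity
    have hεq : 2*q ≤ ε := by rw [← hpq, hp, hε]; exact inv_pow_le (by omega)
    have hq1 : q ≤ 1 := by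
      rw [hq]; apply inv_le_one_of_one_le₀; apply one_le_pow₀; norm_num
    nlinarith [ih', hqpos, hεq, hq1]

lemma cpr_last {e m : ℕ} (he : 1 ≤ e) (hm : 2 ≤ m) :
    1 - ((2:ℚ)^e)⁻¹ ≤ cpr e m (m-1) := by
  obtain ⟨k, rfl⟩ : ∃ k, m = k + 2 := ⟨m - 2, by omega⟩
  have h2 : k + 2 - 1 = k + 1 := by omega
  have h3 : k + 2 - 2 = k := by omega
  have hgap : gp e (k+2) (k+1) = e + k := by unfold gp; rw [h3]; congr 1; omega
  rw [h2, cpr, hgap]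
  have hlb := cpr_lb (m := k+2) he k (by omega)
  set q : ℚ := ((2:ℚ)^(e+k))⁻¹ with hq
  set ε : ℚ := ((2:ℚ)^e)⁻¹ with hε
  have hqpos : 0 < q := by rw [hq]; positivity
  have hqε : q ≤ ε := by rw [hq, hε]; exact inv_pow_le (by omega)
  have hq1 : q ≤ 1 := by
    rw [hq]; apply inv_le_one_of_one_le₀; apply one_le_pow₀; norm_num
  nlinarith [hlb, hqpos, hqε, hq1]

lemma alph_last_pos {e m : ℕ} (δ : ℚ) (he : 1 ≤ e) (hm : 2 ≤ m) (hδ1 : δ ≤ 1)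
    (hδe : ((2:ℚ)^e)⁻¹ < δ) : 0 < alph e m δ (m-1) := by
  have hid := cpr_identity (m := m) δ he (m-1)
  have hcl := cpr_last he hm
  have hε : ((2:ℚ)^e)⁻¹ ≤ 1/2 := by
    calc ((2:ℚ)^e)⁻¹ ≤ ((2:ℚ)^1)⁻¹ := inv_pow_le he
    _ = 1/2 := by norm_num
  by_contra h
  push_neg at h
  have h1 : 1 ≤ 1 - alph e m δ (m-1) := by linarith
  have hcpos : 0 < cpr e m (m-1) := by linarith
  nlinarith

lemma step_ineq {g R : ℕ} (hgR : g ≤ R) {α α' : ℚ}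
    (hK : (2:ℚ) ≤ (2:ℚ)^g)
    (hα' : α' = ((2:ℚ)^g * α - 1) / ((2:ℚ)^g - 1))
    (aσ aτ1 aτ2 : ℚ)
    (hsum : aσ ≤ ((2:ℚ)^g - 1) * aτ2 + aτ1)
    (hb : aτ1 ≤ (2:ℚ)^(R-g))
    (hle : aτ2 ≤ aτ1)
    (hinv : α * 2^R ≤ aσ) :
    α' * (2:ℚ)^(R-g) ≤ aτ2 ∧ α' * (2:ℚ)^(R-g) ≤ aτ1 := by
  have hK1 : (0:ℚ) < (2:ℚ)^g - 1 := by linarith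
  have hR : (2:ℚ)^R = (2:ℚ)^(R-g) * (2:ℚ)^g := by
    rw [← pow_add]; congr 1; omega
  have hkey : α' * ((2:ℚ)^g - 1) = (2:ℚ)^g * α - 1 := by
    rw [hα']; field_simp
  have hR' : α * (2:ℚ)^R = (2:ℚ)^(R-g) * ((2:ℚ)^g * α) := by rw [hR]; ring
  have h2 : (2:ℚ)^(R-g) * ((2:ℚ)^g * α - 1) ≤ aτ2 * ((2:ℚ)^g - 1) := by
    have : (2:ℚ)^(R-g) * ((2:ℚ)^g * α - 1)
        = (2:ℚ)^(R-g) * ((2:ℚ)^g * α) - (2:ℚ)^(R-g) := by ring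
    rw [this, ← hR']
    nlinarith
  have h3 : α' * (2:ℚ)^(R-g) * ((2:ℚ)^g - 1) ≤ aτ2 * ((2:ℚ)^g - 1) := by
    calc α' * (2:ℚ)^(R-g) * ((2:ℚ)^g - 1) = (2:ℚ)^(R-g) * (α' * ((2:ℚ)^g - 1)) := by ring
    _ = (2:ℚ)^(R-g) * ((2:ℚ)^g * α - 1) := by rw [hkey]
    _ ≤ aτ2 * ((2:ℚ)^g - 1) := h2
  have h4 : α' * (2:ℚ)^(R-g) ≤ aτ2 := le_of_mul_le_mul_right h3 hK1
  exact ⟨h4, le_trans h4 hle⟩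

end Aux3
section Aux4

lemma level_union (S S' : Finset (List Bool)) (x : ℕ) :
    level (S ∪ S') x = level S x ∪ level S' x := Finset.filter_union _ _ _

lemma IsTree.union {S S' : Finset (List Bool)} (h : IsTree S) (h' : IsTree S') :
    IsTree (S ∪ S') := by
  intro σ hσ τ hτ
  rw [Finset.mem_union] at *
  rcases hσ with hσ | hσ
  · exact Or.inl (h σ hσ τ hτ)
  · exact Or.inr (h' σ hσ τ hτ)

lemma mem_initsFinset {σ τ : List Bool} : τ ∈ σ.inits.toFinset ↔ τ <+: σ := by
  rw [List.mem_toFinset, List.mem_inits]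

lemma eOf_spec {δ : ℚ} (hδ0 : 0 < δ) : (2:ℚ) ^ (-(eOf δ : ℤ)) < δ := by
  have hne : {e : ℕ | (2:ℚ) ^ (-(e:ℤ)) < δ}.Nonempty := by
    obtain ⟨n, hn⟩ := exists_pow_lt_of_lt_one hδ0 (show (1:ℚ)/2 < 1 by norm_num)
    refine ⟨n, ?_⟩
    have : (2:ℚ) ^ (-(n:ℤ)) = (1/2) ^ n := by
      rw [zpow_neg, zpow_natCast, ← inv_pow]; norm_num
    simpa [Set.mem_setOf_eq, this] using hn
  exact Nat.sInf_mem hne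

lemma eOf_pos {δ : ℚ} (hδ0 : 0 < δ) (hδ1 : δ ≤ 1) : 1 ≤ eOf δ := by
  by_contra h
  push_neg at h
  interval_cases he : eOf δ
  · have := eOf_spec hδ0
    rw [he] at this
    norm_num at this
    linarith

lemma eOf_inv_lt {δ : ℚ} (hδ0 : 0 < δ) : ((2:ℚ) ^ eOf δ)⁻¹ < δ := by
  have := eOf_spec hδ0
  rwa [zpow_neg, zpow_natCast] at this

end Aux4
/-- The Kučera–Gács coding lemma, with `g(m,δ) = (m-1)e + m(m-1)/2` where `e` is
least with `2^{-e} < δ`. -/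
theorem stmt4 (m : ℕ) (δ : ℚ) (n : ℕ) (X : Finset ℕ)
    (hn : n = gKG m δ) (hmn : m ≤ n) (hm : 1 ≤ m) (hδ1 : δ ≤ 1) (hδ0 : 0 < δ)
    (hX : n ≤ X.card) :
    ∃ Y ⊆ X, Y.card = m ∧ fmin Y = fmin X ∧
      ∀ T : Finset (List Bool), QuasiStrong X T →
        ∀ A ⊆ level T (fmax X), δ * ((level T (fmax X)).card : ℚ) ≤ (A.card : ℚ) →
          ∃ S ⊆ T, QuasiStrong Y S ∧
            ∀ σ, IsLeaf S σ → ∃ τ ∈ A, σ <+: τ := by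
  set e := eOf δ with he_def
  have he1 : 1 ≤ e := eOf_pos hδ0 hδ1
  have hδe : ((2:ℚ)^e)⁻¹ < δ := eOf_inv_lt hδ0
  have hm2 : 2 ≤ m := by
    by_contra h
    have hm1 : m = 1 := by omega
    subst hm1
    rw [gKG] at hn
    norm_num at hn
    omega
  have hn' : n = (m-1) * e + m*(m-1)/2 := hn
  have hidx_last : idx e m (m-1) + 1 ≤ n := by rw [hn']; exact idx_last hm2
  have hn2 : 2 ≤ n := by
    have h1 : 1*1 ≤ (m-1)*e := Nat.mul_le_mul (by omega) he1
    have h2 : 2*1 ≤ m*(m-1) := Nat.mul_le_mul (by omega) (by omega)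
    omega
  have hXpos : 0 < X.card := by omega
  have hidxN : ∀ t, t ≤ m - 1 → idx e m t ≤ X.card - 1 := by
    intro t ht
    have := idx_mono he1 m ht
    omega
  -- the set Y
  have hYmono : ∀ s t : ℕ, s < t → t ≤ m - 1 →
      nthel X (idx e m s) < nthel X (idx e m t) := by
    intro s t hst ht
    have h1 : idx e m (s+1) ≤ idx e m t := idx_mono he1 m (by omega)
    have h2 := idx_lt he1 m s
    have h3 := hidxN t ht
    exact nthel_lt X (by omega) (by omega)
  have hYmono' : ∀ s t : ℕ, s ≤ t → t ≤ m - 1 →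
      nthel X (idx e m s) ≤ nthel X (idx e m t) := by
    intro s t hst ht
    rcases hst.lt_or_eq with h | rfl
    · exact (hYmono s t h ht).le
    · exact le_rfl
  refine ⟨(Finset.range m).image (fun t => nthel X (idx e m t)), ?_, ?_, ?_, ?_⟩
  · intro y hy
    rw [Finset.mem_image] at hy
    obtain ⟨t, ht, rfl⟩ := hy
    rw [Finset.mem_range] at ht
    exact nthel_mem X (by have := hidxN t (by omega); omega)
  · rw [Finset.card_image_of_injOn, Finset.card_range]
    intro s hs t ht hst
    rw [Finset.coe_range, Set.mem_Iio] at hs ht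
    by_contra hne
    rcases Nat.lt_or_ge s t with h | h
    · exact absurd hst (hYmono s t h (by omega)).ne
    · exact absurd hst.symm (hYmono t s (by omega) (by omega)).ne
  · apply fmin_eq_of
    · rw [Finset.mem_image]
      exact ⟨0, Finset.mem_range.mpr (by omega), by rw [show idx e m 0 = 0 from rfl, nthel_zero X hXpos]⟩
    · intro y hy
      rw [Finset.mem_image] at hy
      obtain ⟨t, ht, rfl⟩ := hy
      exact fmin_le X (nthel_mem X (by have := hidxN t (by rw [Finset.mem_range] at ht; omega); omega))
  -- main clause
  intro T hT A hA hAc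
  have hfmax : fmax X = nthel X (X.card - 1) := (nthel_last X hXpos).symm
  have hA' : A ⊆ level T (nthel X (X.card - 1)) := by rwa [hfmax] at hA
  have hAmem : ∀ υ ∈ A, υ ∈ T ∧ υ.length = nthel X (X.card - 1) := by
    intro υ hυ
    exact level_mem.mp (hA' hυ)
  have hsplit : ∀ p q : ℕ, p ≤ q → q ≤ X.card - 1 → ∀ σ ∈ level T (nthel X p),
      (A.filter (fun τ => σ <+: τ)).card
        = ∑ τ ∈ (level T (nthel X q)).filter (fun τ => σ <+: τ),
            (A.filter (fun υ => τ <+: υ)).card := by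
    intro p q hpq hq σ hσ
    exact split_count T hT.1 A hAmem (nthel_mono X hq (by omega)) σ
      (by rw [(level_mem.mp hσ).2]; exact nthel_mono X hpq (by omega))
  have hbound : ∀ p : ℕ, p ≤ X.card - 1 → ∀ σ ∈ level T (nthel X p),
      (A.filter (fun τ => σ <+: τ)).card ≤ 2^(X.card - 1 - p) := by
    intro p hp σ hσ
    calc (A.filter (fun τ => σ <+: τ)).card
        ≤ ((level T (nthel X (X.card-1))).filter (fun τ => σ <+: τ)).card :=
          Finset.card_le_card (Finset.filter_subset_filter _ hA')
      _ = 2^(X.card - 1 - p) := levelcount X T hT hp (by omega) σ hσ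
  -- the recursive construction
  have claim : ∀ q i : ℕ, i + q = m - 1 →
      ∀ σ ∈ level T (nthel X (idx e m i)),
      alph e m δ i * (2:ℚ)^(X.card - 1 - idx e m i)
          ≤ ((A.filter (fun τ => σ <+: τ)).card : ℚ) →
      ∃ S : Finset (List Bool), S ⊆ T ∧ IsTree S ∧
        (∀ τ ∈ S, Compat τ σ) ∧
        (∀ τ ∈ S, ∃ ρ ∈ level S (nthel X (idx e m (m-1))), τ <+: ρ) ∧
        level S (nthel X (idx e m i)) = {σ} ∧
        (∀ t, i ≤ t → t + 1 ≤ m - 1 → ∀ τ ∈ level S (nthel X (idx e m t)),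
          ((level S (nthel X (idx e m (t+1)))).filter (fun υ => τ <+: υ)).card = 2) ∧
        (∀ ρ ∈ level S (nthel X (idx e m (m-1))), ∃ τA ∈ A, ρ <+: τA) := by
    intro q
    induction q with
    | zero =>
      intro i hi σ hσ hinv
      have hi' : i = m - 1 := by omega
      subst hi'
      obtain ⟨hσT, hσlen⟩ := level_mem.mp hσ
      have hApos : ∃ τA ∈ A, σ <+: τA := by
        have hpos : 0 < alph e m δ (m-1) := alph_last_pos δ he1 hm2 hδ1 hδe
        have h2 : (0:ℚ) < ((A.filter (fun τ => σ <+: τ)).card : ℚ) := by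
          have hp : (0:ℚ) < (2:ℚ)^(X.card - 1 - idx e m (m-1)) := by positivity
          nlinarith
        have h3 : 0 < (A.filter (fun τ => σ <+: τ)).card := by exact_mod_cast h2
        obtain ⟨τA, hτA⟩ := Finset.card_pos.mp h3
        rw [Finset.mem_filter] at hτA
        exact ⟨τA, hτA.1, hτA.2⟩
      refine ⟨σ.inits.toFinset, ?_, ?_, ?_, ?_, ?_, ?_, ?_⟩
      · intro τ hτ
        exact hT.1 σ hσT τ (mem_initsFinset.mp hτ)
      · intro τ hτ υ hυ
        exact mem_initsFinset.mpr (hυ.trans (mem_initsFinset.mp hτ))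
      · intro τ hτ
        exact Or.inl (mem_initsFinset.mp hτ)
      · intro τ hτ
        refine ⟨σ, ?_, mem_initsFinset.mp hτ⟩
        exact level_mem.mpr ⟨mem_initsFinset.mpr (List.prefix_refl _), hσlen⟩
      · ext τ
        rw [level_mem, Finset.mem_singleton, mem_initsFinset]
        constructor
        · rintro ⟨h1, h2⟩
          exact h1.eq_of_length (by omega)
        · rintro rfl
          exact ⟨List.prefix_refl _, hσlen⟩
      · intro t ht ht1 τ hτ
        omega
      · intro ρ hρ
        rw [level_mem] at hρ
        have hh : ρ = σ := (mem_initsFinset.mp hρ.1).eq_of_length (by omega)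
        rw [hh]
        exact hApos
    | succ q IH =>
      intro i hi σ hσ hinv
      obtain ⟨hσT, hσlen⟩ := level_mem.mp hσ
      have hi1 : i + 1 ≤ m - 1 := by omega
      have hgidx : idx e m (i+1) = idx e m i + gp e m (i+1) := rfl
      have hidx1 : idx e m (i+1) ≤ X.card - 1 := hidxN _ hi1
      have hidx0 : idx e m i ≤ X.card - 1 := hidxN _ (by omega)
      have hLL : nthel X (idx e m i) < nthel X (idx e m (i+1)) := by
        apply nthel_lt X (by have := idx_lt he1 m i; omega) (by omega)
      -- children
      have hBcard : ((level T (nthel X (idx e m (i+1)))).filter (fun τ => σ <+: τ)).card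
          = 2 ^ (gp e m (i+1)) := by
        rw [levelcount X T hT (by omega) (by omega : idx e m (i+1) < X.card) σ hσ]
        congr 1
        omega
      have hB2 : 2 ≤ ((level T (nthel X (idx e m (i+1)))).filter (fun τ => σ <+: τ)).card := by
        rw [hBcard]
        calc 2 = 2^1 := rfl
        _ ≤ 2 ^ gp e m (i+1) := Nat.pow_le_pow_right (by omega) (gp_pos he1 m (i+1))
      set B := (level T (nthel X (idx e m (i+1)))).filter (fun τ => σ <+: τ) with hBdef
      obtain ⟨τ1, hτ1B, hτ1max⟩ := Finset.exists_max_image B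
        (fun τ => (A.filter (fun υ => τ <+: υ)).card) (Finset.card_pos.mp (by omega))
      obtain ⟨τ2, hτ2B', hτ2max⟩ := Finset.exists_max_image (B.erase τ1)
        (fun τ => (A.filter (fun υ => τ <+: υ)).card)
        (Finset.card_pos.mp (by rw [Finset.card_erase_of_mem hτ1B]; omega))
      have hτ2B : τ2 ∈ B := Finset.mem_of_mem_erase hτ2B'
      have hτ12 : τ1 ≠ τ2 := fun h => (Finset.mem_erase.mp hτ2B').1 h.symm
      have hτ1lvl : τ1 ∈ level T (nthel X (idx e m (i+1))) := (Finset.mem_filter.mp hτ1B).1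
      have hτ2lvl : τ2 ∈ level T (nthel X (idx e m (i+1))) := (Finset.mem_filter.mp hτ2B).1
      have hστ1 : σ <+: τ1 := (Finset.mem_filter.mp hτ1B).2
      have hστ2 : σ <+: τ2 := (Finset.mem_filter.mp hτ2B).2
      have hτ1len : τ1.length = nthel X (idx e m (i+1)) := (level_mem.mp hτ1lvl).2
      have hτ2len : τ2.length = nthel X (idx e m (i+1)) := (level_mem.mp hτ2lvl).2
      -- counting
      have hsumN : (A.filter (fun τ => σ <+: τ)).card
          ≤ (A.filter (fun υ => τ1 <+: υ)).card
            + (2 ^ gp e m (i+1) - 1) * (A.filter (fun υ => τ2 <+: υ)).card := by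
        rw [hsplit (idx e m i) (idx e m (i+1)) (by omega) hidx1 σ hσ,
          ← Finset.add_sum_erase B _ hτ1B]
        have h1 : ∑ τ ∈ B.erase τ1, (A.filter (fun υ => τ <+: υ)).card
            ≤ (B.erase τ1).card • (A.filter (fun υ => τ2 <+: υ)).card :=
          Finset.sum_le_card_nsmul _ _ _ (fun τ hτ => hτ2max τ hτ)
        rw [Finset.card_erase_of_mem hτ1B, hBcard] at h1
        rw [smul_eq_mul] at h1
        omega
      have hb1 : (A.filter (fun υ => τ1 <+: υ)).card ≤ 2 ^ (X.card - 1 - idx e m (i+1)) :=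
        hbound _ hidx1 τ1 hτ1lvl
      have hle21 : (A.filter (fun υ => τ2 <+: υ)).card ≤ (A.filter (fun υ => τ1 <+: υ)).card :=
        hτ1max τ2 hτ2B
      -- the step inequality
      have hpow1 : (1:ℕ) ≤ 2 ^ gp e m (i+1) := Nat.one_le_two_pow
      have hexp : X.card - 1 - idx e m i - gp e m (i+1) = X.card - 1 - idx e m (i+1) := by
        omega
      have hcastsub : ((2 ^ gp e m (i+1) - 1 : ℕ) : ℚ) = (2:ℚ) ^ gp e m (i+1) - 1 := by
        rw [Nat.cast_sub hpow1]
        push_cast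
        ring
      have hstep := step_ineq (g := gp e m (i+1)) (R := X.card - 1 - idx e m i)
        (by omega) (two_le_pow_gp he1 m (i+1)) rfl
        ((A.filter (fun τ => σ <+: τ)).card : ℚ)
        ((A.filter (fun υ => τ1 <+: υ)).card : ℚ)
        ((A.filter (fun υ => τ2 <+: υ)).card : ℚ)
        (by
          have h2 : ((A.filter (fun τ => σ <+: τ)).card : ℚ)
              ≤ ((A.filter (fun υ => τ1 <+: υ)).card : ℚ)
                + ((2 ^ gp e m (i+1) - 1 : ℕ) : ℚ) * ((A.filter (fun υ => τ2 <+: υ)).card : ℚ) := by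
            exact_mod_cast hsumN
          rw [hcastsub] at h2
          linarith)
        (by rw [hexp]; exact_mod_cast hb1)
        (by exact_mod_cast hle21)
        hinv
      rw [hexp] at hstep
      obtain ⟨hinv2, hinv1⟩ := hstep
      -- apply IH
      obtain ⟨S1, hS1T, hS1tree, hS1compat, hS1ext, hS1root, hS1branch, hS1leaf⟩ :=
        IH (i+1) (by omega) τ1 hτ1lvl hinv1
      obtain ⟨S2, hS2T, hS2tree, hS2compat, hS2ext, hS2root, hS2branch, hS2leaf⟩ :=
        IH (i+1) (by omega) τ2 hτ2lvl hinv2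
      have hτ1S1 : τ1 ∈ S1 := by
        have := hS1root ▸ (Finset.mem_singleton_self τ1)
        exact (level_mem.mp this).1
      have hτ2S2 : τ2 ∈ S2 := by
        have := hS2root ▸ (Finset.mem_singleton_self τ2)
        exact (level_mem.mp this).1
      have hS1up : ∀ τ ∈ S1, τ1.length ≤ τ.length → τ1 <+: τ := by
        intro τ hτ hlen
        exact compat_prefix_of_le (compat_symm (hS1compat τ hτ)) hlen
      have hS2up : ∀ τ ∈ S2, τ2.length ≤ τ.length → τ2 <+: τ := by
        intro τ hτ hlen
        exact compat_prefix_of_le (compat_symm (hS2compat τ hτ)) hlen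
      -- the root level of the union
      have hrootlvl : ∀ (S' : Finset (List Bool)) (τ' : List Bool), IsTree S' → τ' ∈ S' →
          (∀ ρ ∈ S', Compat ρ τ') → σ <+: τ' → τ'.length = nthel X (idx e m (i+1)) →
          level S' (nthel X (idx e m i)) = {σ} := by
        intro S' τ' htree hτ'S hcomp hστ' hτ'len
        ext ρ
        rw [level_mem, Finset.mem_singleton]
        constructor
        · rintro ⟨hρS, hρlen⟩
          have hρτ' : ρ <+: τ' := compat_prefix_of_le (hcomp ρ hρS) (by omega)
          exact eq_of_prefix_length_eq hρτ' hστ' (by omega)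
        · intro hh
          rw [hh]
          refine ⟨?_, hσlen⟩
          have h' : σ = τ'.take σ.length := List.prefix_iff_eq_take.mp hστ'
          rw [h']
          exact htree τ' hτ'S _ (List.take_prefix _ _)
      have hroot1 : level S1 (nthel X (idx e m i)) = {σ} :=
        hrootlvl S1 τ1 hS1tree hτ1S1 hS1compat hστ1 hτ1len
      have hroot2 : level S2 (nthel X (idx e m i)) = {σ} :=
        hrootlvl S2 τ2 hS2tree hτ2S2 hS2compat hστ2 hτ2len
      -- lengths at later stages
      have hlen_ge : ∀ t, i + 1 ≤ t → t ≤ m - 1 →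
          nthel X (idx e m (i+1)) ≤ nthel X (idx e m t) := by
        intro t h1 h2
        exact nthel_mono X (idx_mono he1 m h1) (by have := hidxN t h2; omega)
      refine ⟨S1 ∪ S2, Finset.union_subset hS1T hS2T, hS1tree.union hS2tree, ?_, ?_, ?_, ?_, ?_⟩
      · -- compat with σ
        intro τ hτ
        rw [Finset.mem_union] at hτ
        rcases hτ with hτ | hτ
        · rcases hS1compat τ hτ with h' | h'
          · exact List.prefix_or_prefix_of_prefix h' hστ1
          · exact Or.inr (hστ1.trans h')
        · rcases hS2compat τ hτ with h' | h'
          · exact List.prefix_or_prefix_of_prefix h' hστ2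
          · exact Or.inr (hστ2.trans h')
      · -- extension to top
        intro τ hτ
        rw [Finset.mem_union] at hτ
        rcases hτ with hτ | hτ
        · obtain ⟨ρ, hρ, hpre⟩ := hS1ext τ hτ
          exact ⟨ρ, by rw [level_union]; exact Finset.mem_union_left _ hρ, hpre⟩
        · obtain ⟨ρ, hρ, hpre⟩ := hS2ext τ hτ
          exact ⟨ρ, by rw [level_union]; exact Finset.mem_union_right _ hρ, hpre⟩
      · -- root level
        rw [level_union, hroot1, hroot2, Finset.union_idempotent]
      · -- branching
        intro t hit ht1 τ hτ
        rcases Nat.lt_or_ge i t with hgt | hlt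
        · -- t ≥ i+1
          have ht' : i + 1 ≤ t := hgt
          rw [level_union, Finset.mem_union] at hτ
          have hdisj : ∀ (Sa Sb : Finset (List Bool)) (τa τb : List Bool),
              τ ∈ level Sa (nthel X (idx e m t)) →
              (∀ ρ ∈ Sa, ρ.length ≥ τa.length → τa <+: ρ) →
              (∀ ρ ∈ Sb, ρ.length ≥ τb.length → τb <+: ρ) →
              τa.length = nthel X (idx e m (i+1)) → τb.length = nthel X (idx e m (i+1)) →
              τa ≠ τb →
              (level Sb (nthel X (idx e m (t+1)))).filter (fun υ => τ <+: υ) = ∅ := by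
            intro Sa Sb τa τb hτa hupa hupb hlena hlenb hne
            rw [Finset.eq_empty_iff_forall_notMem]
            intro ρ hρ
            rw [Finset.mem_filter, level_mem] at hρ
            obtain ⟨⟨hρSb, hρlen⟩, hτρ⟩ := hρ
            rw [level_mem] at hτa
            obtain ⟨hτSa, hτlen⟩ := hτa
            have h1 : τa <+: τ := hupa τ hτSa (by
              rw [hτlen, hlena]; exact hlen_ge t ht' (by omega))
            have h2 : τb <+: ρ := hupb ρ hρSb (by
              rw [hρlen, hlenb]; exact hlen_ge (t+1) (by omega) (by omega))
            exact hne (eq_of_prefix_length_eq (h1.trans hτρ) h2 (by omega))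
          rcases hτ with hτ | hτ
          · rw [level_union, Finset.filter_union,
              hdisj S1 S2 τ1 τ2 hτ (fun ρ h1 h2 => hS1up ρ h1 h2) (fun ρ h1 h2 => hS2up ρ h1 h2)
                hτ1len hτ2len hτ12,
              Finset.union_empty]
            exact hS1branch t ht' ht1 τ hτ
          · rw [level_union, Finset.filter_union,
              hdisj S2 S1 τ2 τ1 hτ (fun ρ h1 h2 => hS2up ρ h1 h2) (fun ρ h1 h2 => hS1up ρ h1 h2)
                hτ2len hτ1len (Ne.symm hτ12),
              Finset.empty_union]
            exact hS2branch t ht' ht1 τ hτ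
        · -- t = i
          have ht' : t = i := by omega
          subst ht'
          have hτσ : τ = σ := by
            have : τ ∈ level (S1 ∪ S2) (nthel X (idx e m t)) := hτ
            rw [level_union, hroot1, hroot2, Finset.union_idempotent,
              Finset.mem_singleton] at this
            exact this
          rw [hτσ]
          have hlvl : level (S1 ∪ S2) (nthel X (idx e m (t+1))) = {τ1, τ2} := by
            rw [level_union, hS1root, hS2root]
            rfl
          rw [hlvl]
          rw [Finset.filter_true_of_mem (by
            intro υ hυ
            rw [Finset.mem_insert, Finset.mem_singleton] at hυ
            rcases hυ with rfl | rfl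
            · exact hστ1
            · exact hστ2)]
          rw [Finset.card_insert_of_notMem (by simpa using hτ12), Finset.card_singleton]
      · -- leaves have A-extensions
        intro ρ hρ
        rw [level_union, Finset.mem_union] at hρ
        rcases hρ with hρ | hρ
        · exact hS1leaf ρ hρ
        · exact hS2leaf ρ hρ
  -- initial selection and assembly
  have hXne : X.Nonempty := Finset.card_pos.mp hXpos
  have hlvl0ne : (level T (nthel X 0)).Nonempty := by
    rw [nthel_zero X hXpos]
    exact hT.2.1 _ (fmin_mem X hXne)
  obtain ⟨σ0, hσ0lvl, hσ0max⟩ := Finset.exists_max_image (level T (nthel X 0))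
    (fun σ => (A.filter (fun τ => σ <+: τ)).card) hlvl0ne
  have hsum0 : A.card = ∑ σ' ∈ level T (nthel X 0), (A.filter (fun τ => σ' <+: τ)).card := by
    have h := split_count T hT.1 A hAmem (L := nthel X 0)
      (nthel_mono X (by omega) (by omega)) [] (by simp)
    rw [Finset.filter_true_of_mem (fun τ _ => List.nil_prefix),
      Finset.filter_true_of_mem (fun τ _ => List.nil_prefix)] at h
    exact h
  have hsumtop : (level T (nthel X (X.card - 1))).card
      = (level T (nthel X 0)).card * 2^(X.card - 1) := by
    have h := split_count T hT.1 (level T (nthel X (X.card-1)))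
      (fun υ hυ => level_mem.mp hυ) (L := nthel X 0)
      (nthel_mono X (by omega) (by omega)) [] (by simp)
    rw [Finset.filter_true_of_mem (fun τ _ => List.nil_prefix),
      Finset.filter_true_of_mem (fun τ _ => List.nil_prefix)] at h
    rw [h, Finset.sum_congr rfl
      (fun σ' hσ' => levelcount X T hT (Nat.zero_le _) (by omega) σ' hσ'),
      Finset.sum_const, smul_eq_mul, Nat.sub_zero]
  have hAle : A.card ≤ (level T (nthel X 0)).card * (A.filter (fun τ => σ0 <+: τ)).card := by
    rw [hsum0]
    have h := Finset.sum_le_card_nsmul (level T (nthel X 0))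
      (fun σ' => (A.filter (fun τ => σ' <+: τ)).card) _ hσ0max
    rwa [smul_eq_mul] at h
  have hσ0inv : alph e m δ 0 * (2:ℚ)^(X.card - 1 - idx e m 0)
      ≤ ((A.filter (fun τ => σ0 <+: τ)).card : ℚ) := by
    have hc : (0:ℚ) < ((level T (nthel X 0)).card : ℚ) := by
      exact_mod_cast Finset.card_pos.mpr hlvl0ne
    have h1 : δ * (((level T (nthel X 0)).card : ℚ) * 2^(X.card-1))
        ≤ ((level T (nthel X 0)).card : ℚ) * ((A.filter (fun τ => σ0 <+: τ)).card : ℚ) := by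
      calc δ * (((level T (nthel X 0)).card : ℚ) * 2^(X.card-1))
          = δ * ((level T (fmax X)).card : ℚ) := by
            rw [hfmax, hsumtop]; push_cast; ring
        _ ≤ (A.card : ℚ) := hAc
        _ ≤ _ := by exact_mod_cast hAle
    have h1' : ((level T (nthel X 0)).card : ℚ) * (δ * 2^(X.card-1))
        ≤ ((level T (nthel X 0)).card : ℚ) * ((A.filter (fun τ => σ0 <+: τ)).card : ℚ) := by
      calc ((level T (nthel X 0)).card : ℚ) * (δ * 2^(X.card-1))
          = δ * (((level T (nthel X 0)).card : ℚ) * 2^(X.card-1)) := by ring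
        _ ≤ _ := h1
    have h2 := (mul_le_mul_iff_right₀ hc).mp h1'
    simpa [alph, idx] using h2
  obtain ⟨S, hST, hStree, hScompat, hSext, hSroot, hSbranch, hSleaf⟩ :=
    claim (m-1) 0 (by omega) σ0 (by rw [show idx e m 0 = 0 from rfl]; exact hσ0lvl) hσ0inv
  have hσ0S : σ0 ∈ S := by
    have h := hSroot ▸ Finset.mem_singleton_self σ0
    exact (level_mem.mp h).1
  refine ⟨S, hST, ⟨hStree, ?_, ?_⟩, ?_⟩
  · intro y hy
    rw [Finset.mem_image] at hy
    obtain ⟨t, ht, rfl⟩ := hy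
    rw [Finset.mem_range] at ht
    obtain ⟨ρ, hρ, hpre⟩ := hSext σ0 hσ0S
    rw [level_mem] at hρ
    refine ⟨ρ.take (nthel X (idx e m t)),
      level_mem.mpr ⟨hStree ρ hρ.1 _ (List.take_prefix _ _), ?_⟩⟩
    rw [List.length_take, hρ.2]
    have h := hYmono' t (m-1) (by omega) (by omega)
    omega
  · intro a b hcons σ' hσ'
    obtain ⟨ha, hb, hab, hside⟩ := hcons
    rw [Finset.mem_image] at ha hb
    obtain ⟨s, hs, rfl⟩ := ha
    obtain ⟨t, ht, rfl⟩ := hb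
    rw [Finset.mem_range] at hs ht
    have hst : s < t := by
      by_contra hc
      push_neg at hc
      have h := hYmono' t s hc (by omega)
      omega
    have hts : t = s + 1 := by
      by_contra hc
      have h1 : s + 1 < t := by omega
      have h2 : nthel X (idx e m (s+1)) ∈ (Finset.range m).image
          (fun t => nthel X (idx e m t)) := by
        rw [Finset.mem_image]
        exact ⟨s+1, Finset.mem_range.mpr (by omega), rfl⟩
      rcases hside _ h2 with h3 | h3
      · have h := hYmono s (s+1) (by omega) (by omega)
        omega
      · have h := hYmono (s+1) t h1 (by omega)
        omega
    subst hts
    exact hSbranch s (by omega) (by omega) σ' hσ'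
  · intro σ' hleaf
    obtain ⟨hσ'S, hmaxl⟩ := hleaf
    obtain ⟨ρ, hρ, hpre⟩ := hSext σ' hσ'S
    have hρS : ρ ∈ S := (level_mem.mp hρ).1
    have hh : ρ = σ' := hmaxl ρ hρS hpre
    rw [← hh]
    exact hSleaf ρ hρ
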